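/- Let p : E → B be a fibration with the weakly unique path homotopically lifting property (wuphl) such that every fiber p⁻¹(b) is path connected. Then for every e₀ ∈ E, the induced homomorphism p₊ : π₁(E, e₀) → π₁(B, p(e₀)) is an isomorphism (i.e., bijective). -/

import Mathlib

universe u

open scoped unitInterval

/-- `p` has the weakly unique path homotopically lifting property (wuphl). -/
def Wuphl {E B : Type*} [TopologicalSpace E] [TopologicalSpace B] (p : C(E, B)) : Prop :=
  ∀ α β : C(unitInterval, E), α 0 = β 0 → α 1 = β 1 →
    (p.comp α).HomotopicRel (p.comp β) {0, 1} →
    α.HomotopicRel β {0, 1}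

/-- `p` is a (Hurewicz) fibration: it has the homotopy lifting property with respect to
every topological space. -/
def IsFibration {E B : Type*} [TopologicalSpace E] [TopologicalSpace B] (p : C(E, B)) : Prop :=
  ∀ (X : Type u) [TopologicalSpace X] (f : C(X, E)) (F : C(X × unitInterval, B)),
    (∀ x, F (x, 0) = p (f x)) →
    ∃ F' : C(X × unitInterval, E), (∀ z, p (F' z) = F z) ∧ (∀ x, F' (x, 0) = f x)

/-- The homomorphism induced by a continuous map `p` on fundamental groups. -/
noncomputable def inducedPi1Hom {E B : Type u} [TopologicalSpace E] [TopologicalSpace B]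
    (p : C(E, B)) (e : E) :
    FundamentalGroup E e →* FundamentalGroup B (p e) :=
  CategoryTheory.Functor.mapEnd (FundamentalGroupoid.mk e)
    (FundamentalGroupoid.fundamentalGroupoidFunctor.map
      (X := TopCat.of E) (Y := TopCat.of B) (TopCat.ofHom p))

attribute [local instance] Path.Homotopic.setoid

/-- `p.comp` of a path's continuous map equals the map of the path. -/
lemma comp_toCM {E B : Type u} [TopologicalSpace E] [TopologicalSpace B] (p : C(E, B))
    {x y : E} (α : Path x y) :
    p.comp α.toContinuousMap = (α.map p.continuous).toContinuousMap := rfl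

lemma homotopic_of_mapFn {E B : Type u} [TopologicalSpace E] [TopologicalSpace B]
    (p : C(E, B)) (hw : Wuphl p) {x y : E} (α β : Path x y)
    (h : Path.Homotopic (α.map p.continuous) (β.map p.continuous)) :
    Path.Homotopic α β := by
  obtain ⟨H⟩ := h
  have := hw α.toContinuousMap β.toContinuousMap (by simp) (by simp) ⟨H⟩
  obtain ⟨H'⟩ := this
  exact ⟨H'⟩

theorem fibration_wuphl_pathConnected_fibers_pi1_iso {E B : Type u} [TopologicalSpace E]
    [TopologicalSpace B] (p : C(E, B)) (hp : IsFibration p) (hw : Wuphl p)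
    (hfib : ∀ b : B, IsPathConnected (⇑p ⁻¹' {b})) :
    ∀ e₀ : E, Function.Bijective (inducedPi1Hom p e₀) := by
  intro e₀
  constructor
  · -- injectivity
    intro a b hab
    have h : (FundamentalGroupoid.fundamentalGroupoidFunctor.map
        (X := TopCat.of E) (Y := TopCat.of B) (TopCat.ofHom p)).map a
        = (FundamentalGroupoid.fundamentalGroupoidFunctor.map
        (X := TopCat.of E) (Y := TopCat.of B) (TopCat.ofHom p)).map b := hab
    have qa : Path.Homotopic.Quotient e₀ e₀ := a
    show (a : Path.Homotopic.Quotient e₀ e₀) = b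
    obtain ⟨α, hα⟩ := Quotient.exists_rep (a : Path.Homotopic.Quotient e₀ e₀)
    obtain ⟨β, hβ⟩ := Quotient.exists_rep (b : Path.Homotopic.Quotient e₀ e₀)
    rw [← hα, ← hβ]
    apply Quotient.sound
    apply homotopic_of_mapFn p hw
    have h' : Path.Homotopic.Quotient.map
        ((a : Path.Homotopic.Quotient e₀ e₀)) p
        = Path.Homotopic.Quotient.map ((b : Path.Homotopic.Quotient e₀ e₀)) p := h
    rw [← hα, ← hβ] at h'
    have h'' : (⟦α.map p.continuous⟧ : Path.Homotopic.Quotient (p e₀) (p e₀))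
        = ⟦β.map p.continuous⟧ := h'
    exact Quotient.exact h''
  · -- surjectivity
    intro b
    obtain ⟨γ, hγ⟩ := Quotient.exists_rep (b : Path.Homotopic.Quotient (p e₀) (p e₀))
    -- lift γ to a path in E starting at e₀
    obtain ⟨F', hF'p, hF'0⟩ := hp PUnit (ContinuousMap.const _ e₀)
      ⟨fun z => γ z.2, by continuity⟩ (by intro x; simp)
    set e₁ : E := F' (PUnit.unit, 1) with he₁
    have hpe₁ : p e₁ = p e₀ := by
      have := hF'p (PUnit.unit, 1)
      simpa using this
    let γ' : Path e₀ e₁ :=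
      { toFun := fun t => F' (PUnit.unit, t)
        continuous_toFun := by continuity
        source' := hF'0 PUnit.unit
        target' := rfl }
    -- path in the fiber from e₁ to e₀
    obtain ⟨δ, hδ⟩ := (hfib (p e₀)).joinedIn e₁ (by simp [hpe₁]) e₀ (by simp)
    let α : Path e₀ e₀ := γ'.trans δ
    refine ⟨FundamentalGroup.fromPath (X := TopCat.of E) (x := e₀) ⟦α⟧, ?_⟩
    show Path.Homotopic.Quotient.map (⟦α⟧ : Path.Homotopic.Quotient e₀ e₀) p
        = (b : Path.Homotopic.Quotient (p e₀) (p e₀))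
    rw [← hγ]
    show (⟦α.map p.continuous⟧ : Path.Homotopic.Quotient (p e₀) (p e₀)) = ⟦γ⟧
    apply Quotient.sound
    have hmap : α.map p.continuous = γ.trans (Path.refl (p e₀)) := by
      ext t
      simp only [α, Path.map_coe, Path.trans_apply, Function.comp_apply, Path.refl_apply]
      split_ifs with h
      · exact hF'p (PUnit.unit, _)
      · exact hδ _
    rw [hmap]
    exact ⟨Path.Homotopy.transRefl γ⟩
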